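/- Let A, k, f > 0 with A·k < f, let τ > 0, and let X : [0, τ] → ℝ be continuously differentiable with X(0) = π, X(τ) = −π, and A·k·cos(X(t)) − f ≤ X′(t) < 0 for all t ∈ [0, τ]. Then τ > 2π/f. -/

import Mathlib

open Real

lemma pair_inv_le (f u : ℝ) (hf : 0 < f) (hu : |u| < f) :
    2 / f ≤ (f + u)⁻¹ + (f - u)⁻¹ := by
  have h1 : 0 < f + u := by cases abs_lt.1 hu; linarith
  have h2 : 0 < f - u := by cases abs_lt.1 hu; linarith
  rw [div_le_iff₀ hf, add_mul, inv_mul_eq_div, inv_mul_eq_div,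
    div_add_div _ _ h1.ne' h2.ne', le_div_iff₀ (mul_pos h1 h2)]
  nlinarith [sq_nonneg u]

lemma pair_inv_lt (f u : ℝ) (hf : 0 < f) (hu : |u| < f) (hu0 : u ≠ 0) :
    2 / f < (f + u)⁻¹ + (f - u)⁻¹ := by
  have h1 : 0 < f + u := by cases abs_lt.1 hu; linarith
  have h2 : 0 < f - u := by cases abs_lt.1 hu; linarith
  rw [div_lt_iff₀ hf, add_mul, inv_mul_eq_div, inv_mul_eq_div,
    div_add_div _ _ h1.ne' h2.ne', lt_div_iff₀ (mul_pos h1 h2)]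
  have : 0 < u ^ 2 := by positivity
  nlinarith

/-- If `X : [0,τ] → ℝ` is `C¹` with `X(0) = π`, `X(τ) = −π` and
`Ak·cos(X t) − f ≤ X′(t) < 0` on `[0,τ]` (where `0 < Ak < f`), then `τ > 2π/f`. -/
theorem forward_drift_time (A k f τ : ℝ) (hA : 0 < A) (hk : 0 < k) (hf : 0 < f)
    (hAk : A * k < f) (hτ : 0 < τ) (X X' : ℝ → ℝ)
    (hderiv : ∀ t ∈ Set.Icc 0 τ, HasDerivWithinAt X (X' t) (Set.Icc 0 τ) t)
    (hcont : ContinuousOn X' (Set.Icc 0 τ))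
    (h0 : X 0 = π) (h1 : X τ = -π)
    (hbound : ∀ t ∈ Set.Icc 0 τ, A * k * Real.cos (X t) - f ≤ X' t ∧ X' t < 0) :
    2 * π / f < τ := by
  set b := A * k with hbdef
  have hb0 : 0 < b := mul_pos hA hk
  have hden : ∀ u : ℝ, 0 < f - b * Real.cos u := by
    intro u
    nlinarith [Real.cos_le_one u, Real.neg_one_le_cos u]
  have hcontd : Continuous fun u : ℝ => (f - b * Real.cos u)⁻¹ :=
    (continuous_const.sub (continuous_const.mul Real.continuous_cos)).inv₀
      fun u => (hden u).ne'
  set G : ℝ → ℝ := fun u => ∫ s in (-π)..u, (f - b * Real.cos s)⁻¹ with hGdef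
  have hGderiv : ∀ u : ℝ, HasDerivAt G ((f - b * Real.cos u)⁻¹) u := fun u =>
    (hcontd.integral_hasStrictDerivAt (-π) u).hasDerivAt
  have hGcont : Continuous G :=
    Differentiable.continuous fun u => (hGderiv u).differentiableAt
  -- the function h(t) = G(X t) + t is monotone on [0, τ]
  have hXcont : ContinuousOn X (Set.Icc 0 τ) := fun t ht =>
    (hderiv t ht).continuousWithinAt
  have hmono : MonotoneOn (fun t => G (X t) + t) (Set.Icc 0 τ) := by
    apply monotoneOn_of_hasDerivWithinAt_nonneg (convex_Icc 0 τ)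
      (f' := fun t => (f - b * Real.cos (X t))⁻¹ * X' t + 1)
    · exact (hGcont.comp_continuousOn hXcont).add continuousOn_id
    · intro t ht
      have ht' : t ∈ Set.Icc 0 τ := interior_subset ht
      exact ((hGderiv (X t)).comp_hasDerivWithinAt t
        ((hderiv t ht').mono interior_subset)).add (hasDerivWithinAt_id t _)
    · intro t ht
      have ht' : t ∈ Set.Icc 0 τ := interior_subset ht
      have hlow : -(f - b * Real.cos (X t)) ≤ X' t := by
        have := (hbound t ht').1; linarith
      have hdpos : 0 < (f - b * Real.cos (X t))⁻¹ := inv_pos.2 (hden _)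
      have hmul : (f - b * Real.cos (X t))⁻¹ * (-(f - b * Real.cos (X t)))
          ≤ (f - b * Real.cos (X t))⁻¹ * X' t :=
        mul_le_mul_of_nonneg_left hlow hdpos.le
      have hcancel : (f - b * Real.cos (X t))⁻¹ * (f - b * Real.cos (X t)) = 1 :=
        inv_mul_cancel₀ (hden _).ne'
      nlinarith
  -- hence G(π) ≤ τ
  have hGτ : G π ≤ τ := by
    have h0m : (0 : ℝ) ∈ Set.Icc 0 τ := ⟨le_refl 0, hτ.le⟩
    have hτm : τ ∈ Set.Icc 0 τ := ⟨hτ.le, le_refl τ⟩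
    have := hmono h0m hτm hτ.le
    simp only [h0, h1] at this
    have hGneg : G (-π) = 0 := intervalIntegral.integral_same
    rw [hGneg] at this
    linarith
  -- now show 2π/f < G(π) using the pairing trick
  have hπ : (0 : ℝ) < π := Real.pi_pos
  have hint : IntervalIntegrable (fun s => (f - b * Real.cos s)⁻¹) MeasureTheory.volume (-π) 0 :=
    hcontd.intervalIntegrable _ _
  have hint2 : IntervalIntegrable (fun s => (f - b * Real.cos s)⁻¹) MeasureTheory.volume 0 π :=
    hcontd.intervalIntegrable _ _
  have hsplit : G π = (∫ s in (-π)..0, (f - b * Real.cos s)⁻¹)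
      + ∫ s in (0:ℝ)..π, (f - b * Real.cos s)⁻¹ :=
    (intervalIntegral.integral_add_adjacent_intervals hint hint2).symm
  have hshift : (∫ s in (-π)..0, (f - b * Real.cos s)⁻¹)
      = ∫ s in (0:ℝ)..π, (f + b * Real.cos s)⁻¹ := by
    have := intervalIntegral.integral_comp_sub_right
      (a := (0:ℝ)) (b := π) (fun s => (f - b * Real.cos s)⁻¹) π
    rw [zero_sub, sub_self] at this
    rw [← this]
    congr 1
    ext s
    rw [show Real.cos (s - π) = -Real.cos s by
      rw [Real.cos_sub]; simp]
    ring_nf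
  have hcomb : G π = ∫ s in (0:ℝ)..π,
      ((f + b * Real.cos s)⁻¹ + (f - b * Real.cos s)⁻¹) := by
    rw [hsplit, hshift]
    rw [← intervalIntegral.integral_add]
    · exact ((continuous_const.add (continuous_const.mul Real.continuous_cos)).inv₀
        (fun u => by show f + b * Real.cos u ≠ 0; nlinarith [Real.cos_le_one u, Real.neg_one_le_cos u])).intervalIntegrable _ _
    · exact hint2
  have habs : ∀ s : ℝ, |b * Real.cos s| < f := by
    intro s
    rw [abs_mul, abs_of_pos hb0]
    have := Real.abs_cos_le_one s
    nlinarith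
  have hlt : 2 * π / f < G π := by
    rw [hcomb]
    have h2πf : 2 * π / f = ∫ _ in (0:ℝ)..π, 2 / f := by
      rw [intervalIntegral.integral_const]
      rw [smul_eq_mul]; ring
    rw [h2πf]
    apply intervalIntegral.integral_lt_integral_of_continuousOn_of_le_of_exists_lt hπ
      continuousOn_const
    · exact (((continuous_const.add (continuous_const.mul Real.continuous_cos)).inv₀
        (fun u => by show f + b * Real.cos u ≠ 0; nlinarith [Real.cos_le_one u, Real.neg_one_le_cos u])).add
        hcontd).continuousOn
    · intro s _
      exact pair_inv_le f (b * Real.cos s) hf (habs s)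
    · refine ⟨0, ⟨le_refl 0, hπ.le⟩, ?_⟩
      have : b * Real.cos 0 ≠ 0 := by rw [Real.cos_zero, mul_one]; exact hb0.ne'
      exact pair_inv_lt f (b * Real.cos 0) hf (habs 0) this
  linarith
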